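/- Let β ∈ ℝⁿ, α², ν, t₀ > 0, 0 < μ < 1, z(ξ) = α²‖ξ‖² + i(β·ξ) + ν, Λ(ξ) = z(ξ)/(1 - e^{-z(ξ)t₀}), and R²_μ(ξ) = Λ(ξ)/(1 + μ²‖ξ‖⁴). Then for all ξ ∈ ℝⁿ, |R²_μ(ξ)| < M₂/μ² where M₂ = max{2ν + 2α² + 2√n‖β‖_∞, 2/t₀ + 2√n‖β‖_∞/(ν t₀)}. -/

import Mathlib

set_option maxHeartbeats 1600000 in
theorem R16_bound {n : ℕ} (β : EuclideanSpace ℝ (Fin n))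
    (α2 ν t0 μ : ℝ) (hα : 0 < α2) (hν : 0 < ν) (ht : 0 < t0)
    (hμ0 : 0 < μ) (hμ1 : μ < 1) :
    ∀ ξ : EuclideanSpace ℝ (Fin n),
      ‖((((α2 * ‖ξ‖ ^ 2 + ν : ℝ) : ℂ) + (inner ℝ β ξ : ℝ) * Complex.I) /
            (1 - Complex.exp
              (-((((α2 * ‖ξ‖ ^ 2 + ν : ℝ) : ℂ) + (inner ℝ β ξ : ℝ) * Complex.I) * t0)))) /
          ((1 + μ ^ 2 * ‖ξ‖ ^ 4 : ℝ) : ℂ)‖ <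
        (max (2 * ν + 2 * α2 + 2 * Real.sqrt n * (⨆ i, |β i|)) (2 / t0 + 2 * Real.sqrt n * (⨆ i, |β i|) / (ν * t0))) / μ ^ 2 := by
  intro ξ
  set s : ℝ := ‖ξ‖ with hs
  clear_value s
  set b : ℝ := (inner ℝ β ξ : ℝ) with hbdef
  clear_value b
  set B : ℝ := ⨆ i, |β i| with hBdef
  clear_value B
  have hs0 : (0:ℝ) ≤ s := hs ▸ norm_nonneg ξ
  have hB0 : 0 ≤ B := hBdef ▸ Real.iSup_nonneg fun i => abs_nonneg (β i)
  have hBi : ∀ i, |β i| ≤ B := fun i => hBdef ▸ le_ciSup (Set.Finite.bddAbove (Set.finite_range fun j => |β j|)) i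
  have hβnorm : ‖β‖ ≤ Real.sqrt n * B := by
    rw [EuclideanSpace.norm_eq]
    have h1 : ∑ i, ‖β i‖ ^ 2 ≤ (n : ℝ) * B ^ 2 := by
      calc ∑ i, ‖β i‖ ^ 2 ≤ ∑ _i : Fin n, B ^ 2 := by
            apply Finset.sum_le_sum
            intro i _
            rw [Real.norm_eq_abs]
            exact pow_le_pow_left₀ (abs_nonneg _) (hBi i) 2
        _ = (n : ℝ) * B ^ 2 := by simp [Finset.sum_const]
    calc Real.sqrt (∑ i, ‖β i‖ ^ 2) ≤ Real.sqrt ((n:ℝ) * B ^ 2) := Real.sqrt_le_sqrt h1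
      _ = Real.sqrt n * B := by
          rw [Real.sqrt_mul (Nat.cast_nonneg n), Real.sqrt_sq hB0]
  have hbB : |b| ≤ Real.sqrt n * B * s := by
    rw [hbdef, hs]
    calc |(inner ℝ β ξ : ℝ)| ≤ ‖β‖ * ‖ξ‖ := abs_real_inner_le_norm β ξ
      _ ≤ Real.sqrt n * B * ‖ξ‖ := mul_le_mul_of_nonneg_right hβnorm (norm_nonneg ξ)
  have hnB0 : 0 ≤ Real.sqrt n * B := mul_nonneg (Real.sqrt_nonneg _) hB0
  set a : ℝ := α2 * s ^ 2 + ν with hadef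
  clear_value a
  have ha : 0 < a := by rw [hadef]; positivity
  have hab : 0 < a + |b| := add_pos_of_pos_of_nonneg ha (abs_nonneg b)
  set P : ℝ := 1 + μ ^ 2 * s ^ 4 with hPdef
  clear_value P
  have hP1 : (1:ℝ) ≤ P := by rw [hPdef]; nlinarith [sq_nonneg (μ * s^2)]
  have hP : 0 < P := lt_of_lt_of_le one_pos hP1
  have hμ2 : (0:ℝ) < μ ^ 2 := by positivity
  have hμ21 : μ ^ 2 ≤ 1 := by nlinarith
  set z : ℂ := ((a : ℝ) : ℂ) + (b : ℂ) * Complex.I with hzdef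
  clear_value z
  have habs_z : ‖z‖ ≤ a + |b| := by
    rw [hzdef]
    calc ‖((a:ℝ):ℂ) + (b:ℂ) * Complex.I‖
        ≤ ‖((a:ℝ):ℂ)‖ + ‖(b:ℂ) * Complex.I‖ :=
          norm_add_le _ _
      _ = a + |b| := by
          simp [Complex.norm_real, abs_of_pos ha]
  have hexp_abs : ‖Complex.exp (-(z * (t0:ℂ)))‖ = Real.exp (-(a * t0)) := by
    rw [Complex.norm_exp]
    congr 1
    simp [hzdef, Complex.mul_re]
  have hDpos : 0 < 1 - Real.exp (-(a * t0)) := by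
    have h1 : Real.exp (-(a * t0)) < 1 := by
      rw [Real.exp_lt_one_iff]
      nlinarith
    linarith
  have hD : 1 - Real.exp (-(a * t0)) ≤ ‖1 - Complex.exp (-(z * (t0:ℂ)))‖ := by
    have h := norm_sub_norm_le (1 : ℂ) (Complex.exp (-(z * (t0:ℂ))))
    rw [norm_one] at h
    rw [← hexp_abs]
    simpa using h
  have habsP : ‖(((P : ℝ)):ℂ)‖ = P := by
    rw [Complex.norm_real, Real.norm_eq_abs, abs_of_pos hP]
  rw [norm_div, norm_div, habsP]
  -- key pointwise facts
  have F1 : μ ^ 2 * s ≤ P := by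
    rw [hPdef]
    rcases le_total s 1 with h | h
    · have h1 : μ ^ 2 * s ≤ 1 := mul_le_one₀ hμ21 hs0 h
      nlinarith [sq_nonneg (μ * s ^ 2)]
    · have hss : s ^ 1 ≤ s ^ 4 := pow_le_pow_right₀ h (by norm_num)
      rw [pow_one] at hss
      nlinarith [mul_le_mul_of_nonneg_left hss hμ2.le]
  have F2 : μ ^ 2 * s ^ 2 ≤ P := by
    rw [hPdef]
    rcases le_total s 1 with h | h
    · have hs2 : s ^ 2 ≤ 1 := by nlinarith
      have h1 : μ ^ 2 * s ^ 2 ≤ 1 := mul_le_one₀ hμ21 (sq_nonneg s) hs2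
      nlinarith [sq_nonneg (μ * s ^ 2)]
    · have hss : s ^ 2 ≤ s ^ 4 := pow_le_pow_right₀ h (by norm_num)
      nlinarith [mul_le_mul_of_nonneg_left hss hμ2.le]
  have hx : 0 < a * t0 := mul_pos ha ht
  have hexpkey : (1 + a * t0) * Real.exp (-(a * t0)) < 1 := by
    have h1 : 1 + a * t0 < Real.exp (a * t0) := by
      have := Real.add_one_lt_exp (ne_of_gt hx)
      linarith
    have h2 : 0 < Real.exp (-(a * t0)) := Real.exp_pos _
    calc (1 + a * t0) * Real.exp (-(a * t0)) < Real.exp (a * t0) * Real.exp (-(a * t0)) := by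
          nlinarith
      _ = 1 := by rw [← Real.exp_add]; simp
  have step2 : (a + |b|) / (1 - Real.exp (-(a * t0))) < (a + |b|) * (1 + 1 / (a * t0)) := by
    have hrw : (a + |b|) * (1 + 1 / (a * t0)) = (a + |b|) * (a * t0 + 1) / (a * t0) := by
      field_simp
    rw [hrw, div_lt_div_iff₀ hDpos hx]
    have hgt : a * t0 < (a * t0 + 1) * (1 - Real.exp (-(a * t0))) := by nlinarith
    nlinarith
  -- core estimate for |b|
  have CORE : |b| * μ ^ 2 ≤ Real.sqrt n * B * P := by
    calc |b| * μ ^ 2 ≤ (Real.sqrt n * B * s) * μ ^ 2 := by nlinarith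
      _ = Real.sqrt n * B * (μ ^ 2 * s) := by ring
      _ ≤ Real.sqrt n * B * P := by nlinarith
  have h1 : a / P ≤ (α2 + ν) / μ ^ 2 := by
    rw [div_le_div_iff₀ hP hμ2]
    nlinarith [mul_le_mul_of_nonneg_left F2 hα.le]
  have h2 : |b| / P ≤ Real.sqrt n * B / μ ^ 2 := by
    rw [div_le_div_iff₀ hP hμ2]
    linarith [CORE]
  have h3 : (1 / t0) / P ≤ (1 / t0) / μ ^ 2 := by
    rw [div_le_div_iff₀ hP hμ2]
    exact mul_le_mul_of_nonneg_left (hμ21.trans hP1) (by positivity)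
  have hνt : 0 < ν * t0 := mul_pos hν ht
  have h4 : (|b| / (ν * t0)) / P ≤ (Real.sqrt n * B / (ν * t0)) / μ ^ 2 := by
    rw [div_div, div_div, div_le_div_iff₀ (by positivity) (by positivity)]
    nlinarith [mul_le_mul_of_nonneg_right CORE hνt.le]
  have hT : (a + |b|) * (1 + 1 / (a * t0)) ≤ a + |b| + 1 / t0 + |b| / (ν * t0) := by
    have e1 : (a + |b|) * (1 + 1 / (a * t0)) = a + |b| + 1 / t0 + |b| / (a * t0) := by
      field_simp
      ring
    rw [e1]
    have hνa : ν ≤ a := by rw [hadef]; nlinarith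
    have h5 : |b| / (a * t0) ≤ |b| / (ν * t0) := by
      gcongr
    linarith
  set M : ℝ := max (2 * ν + 2 * α2 + 2 * Real.sqrt n * B) (2 / t0 + 2 * Real.sqrt n * B / (ν * t0)) with hM
  have hMsum : (α2 + ν) + Real.sqrt n * B + 1 / t0 + Real.sqrt n * B / (ν * t0) ≤ M := by
    have m1 : 2 * ν + 2 * α2 + 2 * Real.sqrt n * B ≤ M := le_max_left _ _
    have m2 : 2 / t0 + 2 * Real.sqrt n * B / (ν * t0) ≤ M := le_max_right _ _
    have e2 : (2:ℝ) / t0 = 2 * (1 / t0) := by ring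
    have e3 : 2 * Real.sqrt n * B / (ν * t0) = 2 * (Real.sqrt n * B / (ν * t0)) := by ring
    rw [e2, e3] at m2
    linarith
  have step3 : (a + |b|) * (1 + 1 / (a * t0)) / P ≤ M / μ ^ 2 := by
    calc (a + |b|) * (1 + 1 / (a * t0)) / P
        ≤ (a + |b| + 1 / t0 + |b| / (ν * t0)) / P := by gcongr
      _ = a / P + |b| / P + (1 / t0) / P + (|b| / (ν * t0)) / P := by ring
      _ ≤ (α2 + ν) / μ ^ 2 + Real.sqrt n * B / μ ^ 2 + (1 / t0) / μ ^ 2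
            + (Real.sqrt n * B / (ν * t0)) / μ ^ 2 := by linarith
      _ = ((α2 + ν) + Real.sqrt n * B + 1 / t0 + Real.sqrt n * B / (ν * t0)) / μ ^ 2 := by ring
      _ ≤ M / μ ^ 2 := by gcongr
  calc ‖z‖ / ‖1 - Complex.exp (-(z * (t0:ℂ)))‖ / P
      ≤ (a + |b|) / (1 - Real.exp (-(a * t0))) / P := by gcongr
    _ < (a + |b|) * (1 + 1 / (a * t0)) / P := by gcongr
    _ ≤ M / μ ^ 2 := step3
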